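/- Let X be a Hilbert space and F: X → ℝ ∪ {∞} be proper, convex, and lower semicontinuous. Then for every x ∈ X, the Moreau decomposition holds: x = prox_F(x) + prox_{F*}(x). -/

import Mathlib

/-- Convexity for extended-real-valued functionals. -/
def ConvexE {X : Type*} [AddCommMonoid X] [Module ℝ X] (F : X → EReal) : Prop :=
  ∀ x y : X, ∀ a b : ℝ, 0 ≤ a → 0 ≤ b → a + b = 1 →
    F (a • x + b • y) ≤ (a : EReal) * F x + (b : EReal) * F y

/-- The Fenchel conjugate of `F : X → ℝ ∪ {∞}` on a Hilbert space, with `X*`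
identified with `X` via the Riesz isomorphism. -/
noncomputable def HConj {X : Type*} [NormedAddCommGroup X] [InnerProductSpace ℝ X]
    (F : X → EReal) (w : X) : EReal :=
  ⨆ z : X, (((inner ℝ w z : ℝ)) : EReal) - F z

open scoped RealInnerProductSpace

lemma ereal_real {v : EReal} (h1 : v ≠ ⊤) (h2 : v ≠ ⊥) : ∃ r : ℝ, v = (r : EReal) :=
  ⟨v.toReal, (EReal.coe_toReal h1 h2).symm⟩

lemma affine_minorant {X : Type*} [NormedAddCommGroup X] [InnerProductSpace ℝ X]
    [CompleteSpace X] (F : X → EReal)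
    (hproper : ∃ x, F x ≠ ⊤) (hbot : ∀ x, F x ≠ ⊥)
    (hconv : ConvexE F) (hlsc : LowerSemicontinuous F) :
    ∃ (b : X) (c : ℝ), ∀ z, ((c + ⟪b, z⟫ : ℝ) : EReal) ≤ F z := by
  obtain ⟨x₀, hx₀⟩ := hproper
  obtain ⟨r₀, hr₀⟩ := ereal_real hx₀ (hbot x₀)
  set E : Set (X × ℝ) := {p | F p.1 ≤ (p.2 : EReal)} with hE
  have hconvE : Convex ℝ E := by
    rintro ⟨z₁, t₁⟩ h₁ ⟨z₂, t₂⟩ h₂ a b ha hb hab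
    simp only [hE, Set.mem_setOf_eq] at h₁ h₂ ⊢
    have hz₁ : F z₁ ≠ ⊤ := fun h => by simp [h] at h₁
    have hz₂ : F z₂ ≠ ⊤ := fun h => by simp [h] at h₂
    obtain ⟨r₁, hr₁⟩ := ereal_real hz₁ (hbot z₁)
    obtain ⟨r₂, hr₂⟩ := ereal_real hz₂ (hbot z₂)
    have h₁' : r₁ ≤ t₁ := by rwa [hr₁, EReal.coe_le_coe_iff] at h₁
    have h₂' : r₂ ≤ t₂ := by rwa [hr₂, EReal.coe_le_coe_iff] at h₂
    calc F (a • z₁ + b • z₂) ≤ (a : EReal) * F z₁ + (b : EReal) * F z₂ :=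
          hconv z₁ z₂ a b ha hb hab
      _ = ((a * r₁ + b * r₂ : ℝ) : EReal) := by rw [hr₁, hr₂, ← EReal.coe_mul,
          ← EReal.coe_mul, ← EReal.coe_add]
      _ ≤ ((a * t₁ + b * t₂ : ℝ) : EReal) := by
          rw [EReal.coe_le_coe_iff]
          have := mul_le_mul_of_nonneg_left h₁' ha
          have := mul_le_mul_of_nonneg_left h₂' hb
          linarith
  have hclosedE : IsClosed E := by
    rw [← isOpen_compl_iff, isOpen_iff_mem_nhds]
    rintro ⟨z₀, t₀⟩ h
    simp only [Set.mem_compl_iff, hE, Set.mem_setOf_eq, not_le] at h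
    obtain ⟨y, hy1, hy2⟩ : ∃ y : ℝ, (t₀ : EReal) < (y : EReal) ∧ (y : EReal) < F z₀ := by
      obtain ⟨y, hy1, hy2⟩ := EReal.exists_between_coe_real h
      exact ⟨y, hy1, hy2⟩
    have h1 := hlsc z₀ (y : EReal) hy2
    rw [nhds_prod_eq]
    refine Filter.mem_of_superset (Filter.prod_mem_prod h1 (Iio_mem_nhds
      (EReal.coe_lt_coe_iff.1 hy1))) ?_
    rintro ⟨z, t⟩ ⟨hz, ht⟩
    simp only [Set.mem_compl_iff, hE, Set.mem_setOf_eq, not_le]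
    exact lt_trans (EReal.coe_lt_coe_iff.2 ht) hz
  have hpt : (x₀, r₀ - 1) ∉ E := by
    simp only [hE, Set.mem_setOf_eq, hr₀, EReal.coe_le_coe_iff, not_le]
    linarith
  obtain ⟨f, u, hfu, hf⟩ := geometric_hahn_banach_point_closed hconvE hclosedE hpt
  set α : ℝ := f (0, 1) with hα
  have hmem0 : (x₀, r₀) ∈ E := by simp [hE, hr₀]
  have hα_pos : 0 < α := by
    have h1 : u < f (x₀, r₀) := hf _ hmem0
    have h2 : f (x₀, r₀) = f (x₀, r₀ - 1) + α := by
      rw [hα, ← map_add]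
      congr 1
      simp
    rw [h2] at h1
    linarith
  set φ : X →L[ℝ] ℝ := f.comp (ContinuousLinearMap.inl ℝ X ℝ) with hφ
  have hsplit : ∀ (z : X) (t : ℝ), f (z, t) = φ z + t * α := by
    intro z t
    have : (z, t) = (z, (0:ℝ)) + t • ((0:X), (1:ℝ)) := by simp
    rw [this, map_add, map_smul]
    simp [hφ, smul_eq_mul]
    exact Or.inl hα.symm
  set b' : X := (InnerProductSpace.toDual ℝ X).symm φ with hb'
  have hb'eq : ∀ z : X, ⟪b', z⟫ = φ z := fun z => InnerProductSpace.toDual_symm_apply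
  refine ⟨-(α⁻¹) • b', u / α, fun z => ?_⟩
  by_cases hz : F z = ⊤
  · simp [hz]
  obtain ⟨r, hr⟩ := ereal_real hz (hbot z)
  have hmem : (z, r) ∈ E := by simp [hE, hr]
  have h1 : u < φ z + r * α := by rw [← hsplit]; exact hf _ hmem
  rw [hr, EReal.coe_le_coe_iff]
  have h2 : ⟪-(α⁻¹) • b', z⟫ = -(α⁻¹) * φ z := by
    rw [real_inner_smul_left, hb'eq]
  rw [h2]
  rw [div_add' _ _ _ (ne_of_gt hα_pos)]
  rw [div_le_iff₀ hα_pos]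
  have : -(α⁻¹) * φ z * α = -φ z := by field_simp
  nlinarith

lemma prox_exists {X : Type*} [NormedAddCommGroup X] [InnerProductSpace ℝ X]
    [CompleteSpace X] (F : X → EReal)
    (hproper : ∃ x, F x ≠ ⊤) (hbot : ∀ x, F x ≠ ⊥)
    (hconv : ConvexE F) (hlsc : LowerSemicontinuous F) (x : X) :
    ∃ p : X, ∀ z : X, (((1/2 : ℝ) * ‖p - x‖ ^ 2 : ℝ) : EReal) + F p ≤
      (((1/2 : ℝ) * ‖z - x‖ ^ 2 : ℝ) : EReal) + F z := by
  obtain ⟨b, c, hbc⟩ := affine_minorant F hproper hbot hconv hlsc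
  obtain ⟨x₀, hx₀⟩ := hproper
  obtain ⟨r₀, hr₀⟩ := ereal_real hx₀ (hbot x₀)
  set G : X → EReal := fun z => (((1/2 : ℝ) * ‖z - x‖ ^ 2 : ℝ) : EReal) + F z with hG
  set M : ℝ := c + 1/2 * ‖x‖^2 - 1/2 * (‖x‖ + ‖b‖)^2 with hM
  have hlb : ∀ z, (M : EReal) ≤ G z := by
    intro z
    have h1 : ((M : ℝ) : EReal) ≤ (((1/2 : ℝ) * ‖z - x‖ ^ 2 + (c + ⟪b, z⟫) : ℝ) : EReal) := by
      rw [EReal.coe_le_coe_iff]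
      have h2 : |‖z‖ - ‖x‖| ≤ ‖z - x‖ := abs_norm_sub_norm_le z x
      have h3 : (‖z‖ - ‖x‖)^2 ≤ ‖z - x‖^2 := by
        nlinarith [abs_nonneg (‖z‖ - ‖x‖), sq_abs (‖z‖ - ‖x‖), norm_nonneg (z - x)]
      have h4 : |⟪b, z⟫| ≤ ‖b‖ * ‖z‖ := abs_real_inner_le_norm b z
      have h5 := abs_le.1 h4
      nlinarith [sq_nonneg (‖z‖ - ‖x‖ - ‖b‖), norm_nonneg z, norm_nonneg b, norm_nonneg x]
    calc ((M : ℝ) : EReal) ≤ (((1/2 : ℝ) * ‖z - x‖ ^ 2 + (c + ⟪b, z⟫) : ℝ) : EReal) := h1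
      _ = (((1/2 : ℝ) * ‖z - x‖ ^ 2 : ℝ) : EReal) + ((c + ⟪b, z⟫ : ℝ) : EReal) :=
          EReal.coe_add _ _
      _ ≤ G z := add_le_add_right (hbc z) _
  set m : EReal := ⨅ z, G z with hm
  have hmlb : (M : EReal) ≤ m := le_iInf hlb
  have hmub : m ≤ G x₀ := iInf_le _ _
  have hmtop : m ≠ ⊤ := by
    intro h
    rw [h] at hmub
    have : G x₀ = ⊤ := top_le_iff.1 hmub
    rw [hG] at this
    simp only [hr₀, ← EReal.coe_add] at this
    exact EReal.coe_ne_top _ this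
  have hmbot : m ≠ ⊥ := fun h => by simp [h] at hmlb
  obtain ⟨μ, hμ⟩ := ereal_real hmtop hmbot
  have hseq : ∀ n : ℕ, ∃ z, G z < ((μ + 1/(n+1) : ℝ) : EReal) := by
    intro n
    rw [← iInf_lt_iff, ← hm, hμ, EReal.coe_lt_coe_iff]
    have : (0:ℝ) < 1/(n+1) := by positivity
    linarith
  choose u hu using hseq
  -- real values along the sequence
  have hfreal : ∀ n, ∃ fn : ℝ, F (u n) = (fn : EReal) := by
    intro n
    refine ereal_real ?_ (hbot _)
    intro h
    have := hu n
    rw [hG] at this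
    simp only [h] at this
    rw [EReal.coe_add_top] at this
    exact (not_top_lt : ¬ (⊤:EReal) < _) this
  choose fn hfn using hfreal
  set g : ℕ → ℝ := fun n => (1/2 : ℝ) * ‖u n - x‖ ^ 2 + fn n with hg
  have hGu : ∀ n, G (u n) = ((g n : ℝ) : EReal) := by
    intro n; rw [hG]; simp only [hg]; rw [EReal.coe_add, hfn]
  have hg1 : ∀ n, μ ≤ g n := by
    intro n
    have : m ≤ G (u n) := iInf_le _ _
    rw [hμ, hGu n, EReal.coe_le_coe_iff] at this
    exact this
  have hg2 : ∀ n, g n < μ + 1/(n+1) := by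
    intro n
    have := hu n
    rw [hGu n, EReal.coe_lt_coe_iff] at this
    exact this
  -- parallelogram estimate
  have hkey : ∀ n k : ℕ, ‖u n - u k‖^2 ≤ 4/(n+1) + 4/(k+1) := by
    intro n k
    set w : X := (1/2 : ℝ) • u n + (1/2 : ℝ) • u k with hw
    have hFw : F w ≤ (((1/2 : ℝ) * fn n + (1/2 : ℝ) * fn k : ℝ) : EReal) := by
      have := hconv (u n) (u k) (1/2) (1/2) (by norm_num) (by norm_num) (by norm_num)
      rw [hfn, hfn, ← EReal.coe_mul, ← EReal.coe_mul, ← EReal.coe_add] at this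
      exact this
    have hGw : (μ : EReal) ≤ (((1/2 : ℝ) * ‖w - x‖ ^ 2 + ((1/2 : ℝ) * fn n
        + (1/2 : ℝ) * fn k) : ℝ) : EReal) := by
      calc (μ : EReal) = m := hμ.symm
        _ ≤ G w := iInf_le _ _
        _ ≤ (((1/2 : ℝ) * ‖w - x‖ ^ 2 : ℝ) : EReal)
            + (((1/2 : ℝ) * fn n + (1/2 : ℝ) * fn k : ℝ) : EReal) := add_le_add_right hFw _
        _ = _ := (EReal.coe_add _ _).symm
    rw [EReal.coe_le_coe_iff] at hGw
    have hpar : ‖w - x‖^2 = 1/2 * ‖u n - x‖^2 + 1/2 * ‖u k - x‖^2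
        - 1/4 * ‖u n - u k‖^2 := by
      have e1 : w - x = (1/2 : ℝ) • ((u n - x) + (u k - x)) := by
        rw [hw]; module
      have e2 : u n - u k = (u n - x) - (u k - x) := by abel
      rw [e1, e2, norm_smul, mul_pow,
        norm_add_sq_real (u n - x) (u k - x), norm_sub_sq_real (u n - x) (u k - x)]
      simp only [Real.norm_eq_abs, sq_abs]
      ring
    have h1 := hg1 n
    have h2 := hg1 k
    have h3 := hg2 n
    have h4 := hg2 k
    simp only [hg] at h1 h2 h3 h4
    have e3 : (4:ℝ)/(n+1) = 4*(1/(n+1)) := by ring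
    have e4 : (4:ℝ)/(k+1) = 4*(1/(k+1)) := by ring
    rw [e3, e4]
    linarith [hGw, hpar]
  -- Cauchy
  have hcauchy : CauchySeq u := by
    rw [Metric.cauchySeq_iff']
    intro ε hε
    obtain ⟨N, hN⟩ := exists_nat_gt (8/ε^2)
    refine ⟨N, fun n hn => ?_⟩
    rw [dist_eq_norm]
    have h1 : ‖u n - u N‖^2 ≤ 4/(n+1) + 4/(N+1) := hkey n N
    have h2 : (4:ℝ)/(n+1) ≤ 4/(N+1) := by
      apply div_le_div_of_nonneg_left (by norm_num) (by positivity)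
      exact_mod_cast by omega
    have h3 : (8:ℝ)/(N+1) < ε^2 := by
      rw [div_lt_iff₀ (by positivity)]
      have h5 : 8/ε^2 < (N:ℝ) := hN
      have h6 : 8 < ε^2 * N := by
        rw [div_lt_iff₀ (by positivity)] at h5
        linarith [mul_comm (ε^2) (N:ℝ)]
      nlinarith [sq_nonneg ε]
    by_contra hcon
    push_neg at hcon
    have : ε^2 ≤ ‖u n - u N‖^2 := by
      have := pow_le_pow_left₀ (le_of_lt hε) hcon 2
      exact this
    have e8 : (8:ℝ)/(N+1) = 4/(N+1) + 4/(N+1) := by ring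
    linarith
  obtain ⟨p, hp⟩ := cauchySeq_tendsto_of_complete hcauchy
  refine ⟨p, fun z => ?_⟩
  -- show G p ≤ μ
  set L : ℝ := μ - 1/2 * ‖p - x‖^2 with hL
  have hFp : F p ≤ (L : EReal) := by
    by_contra hcon
    push_neg at hcon
    obtain ⟨y, hy1, hy2⟩ := EReal.exists_between_coe_real hcon
    have hev1 : ∀ᶠ n in Filter.atTop, (y : EReal) < F (u n) :=
      hp.eventually (hlsc p (y : EReal) hy2)
    have htend : Filter.Tendsto (fun n : ℕ => μ + 1/(n+1) - 1/2 * ‖u n - x‖^2)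
        Filter.atTop (nhds L) := by
      rw [hL]
      have t1 : Filter.Tendsto (fun n : ℕ => (1:ℝ)/(n+1)) Filter.atTop (nhds 0) :=
        tendsto_one_div_add_atTop_nhds_zero_nat
      have t2 : Filter.Tendsto (fun n : ℕ => ‖u n - x‖^2) Filter.atTop
          (nhds (‖p - x‖^2)) := ((hp.sub_const x).norm.pow 2)
      have := ((tendsto_const_nhds (x := μ)).add t1).sub (t2.const_mul (1/2:ℝ))
      simpa using this
    have hylt : L < y := EReal.coe_lt_coe_iff.1 hy1
    have hev2 : ∀ᶠ n in Filter.atTop, μ + 1/(n+1) - 1/2 * ‖u n - x‖^2 < y :=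
      htend.eventually_lt_const hylt
    obtain ⟨n, hn1, hn2⟩ := (hev1.and hev2).exists
    rw [hfn n, EReal.coe_lt_coe_iff] at hn1
    have := hg2 n
    simp only [hg] at this
    linarith
  have hGp : G p ≤ (μ : EReal) := by
    calc G p = (((1/2 : ℝ) * ‖p - x‖ ^ 2 : ℝ) : EReal) + F p := rfl
      _ ≤ (((1/2 : ℝ) * ‖p - x‖ ^ 2 : ℝ) : EReal) + (L : EReal) := add_le_add_right hFp _
      _ = (((1/2 : ℝ) * ‖p - x‖ ^ 2 + L : ℝ) : EReal) := (EReal.coe_add _ _).symm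
      _ = (μ : EReal) := by rw [hL]; norm_num
  calc (((1/2 : ℝ) * ‖p - x‖ ^ 2 : ℝ) : EReal) + F p = G p := rfl
    _ ≤ (μ : EReal) := hGp
    _ = m := hμ.symm
    _ ≤ G z := iInf_le _ _

/-- Moreau decomposition: for proper, convex, lsc `F` on a Hilbert space and any `x`,
the proximal points `p = prox_F(x)` and `q = prox_{F*}(x)` exist, are unique, and
satisfy `x = p + q`. -/
theorem moreau_decomposition {X : Type*} [NormedAddCommGroup X]
    [InnerProductSpace ℝ X] [CompleteSpace X] (F : X → EReal)
    (hproper : ∃ x, F x ≠ ⊤) (hbot : ∀ x, F x ≠ ⊥)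
    (hconv : ConvexE F) (hlsc : LowerSemicontinuous F) (x : X) :
    ∃ p q : X,
      (∀ z : X, (((1/2 : ℝ) * ‖p - x‖ ^ 2 : ℝ) : EReal) + F p ≤
        (((1/2 : ℝ) * ‖z - x‖ ^ 2 : ℝ) : EReal) + F z) ∧
      (∀ p' : X, (∀ z : X, (((1/2 : ℝ) * ‖p' - x‖ ^ 2 : ℝ) : EReal) + F p' ≤
        (((1/2 : ℝ) * ‖z - x‖ ^ 2 : ℝ) : EReal) + F z) → p' = p) ∧
      (∀ z : X, (((1/2 : ℝ) * ‖q - x‖ ^ 2 : ℝ) : EReal) + HConj F q ≤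
        (((1/2 : ℝ) * ‖z - x‖ ^ 2 : ℝ) : EReal) + HConj F z) ∧
      (∀ q' : X, (∀ z : X, (((1/2 : ℝ) * ‖q' - x‖ ^ 2 : ℝ) : EReal) + HConj F q' ≤
        (((1/2 : ℝ) * ‖z - x‖ ^ 2 : ℝ) : EReal) + HConj F z) → q' = q) ∧
      x = p + q := by
  obtain ⟨p, hp⟩ := prox_exists F hproper hbot hconv hlsc x
  obtain ⟨x₀, hx₀⟩ := hproper
  obtain ⟨r₀, hr₀⟩ := ereal_real hx₀ (hbot x₀)
  have hFptop : F p ≠ ⊤ := by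
    intro h
    have h1 := hp x₀
    rw [h, hr₀, EReal.coe_add_top, ← EReal.coe_add, top_le_iff] at h1
    exact EReal.coe_ne_top _ h1
  obtain ⟨fp, hfp⟩ := ereal_real hFptop (hbot p)
  set q : X := x - p with hq
  -- subgradient inequality
  have hsub : ∀ (z : X) (r : ℝ), F z = (r : EReal) → fp + ⟪q, z - p⟫ ≤ r := by
    intro z r hz
    have hkey : ∀ t : ℝ, 0 < t → t ≤ 1 →
        fp + ⟪q, z - p⟫ ≤ r + t/2 * ‖z - p‖^2 := by
      intro t ht0 ht1
      set zt : X := (1 - t) • p + t • z with hzt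
      have hFzt : F zt ≤ (((1 - t) * fp + t * r : ℝ) : EReal) := by
        have := hconv p z (1 - t) t (by linarith) (le_of_lt ht0) (by ring)
        rw [hfp, hz, ← EReal.coe_mul, ← EReal.coe_mul, ← EReal.coe_add] at this
        exact this
      have hGzt : ((1/2 * ‖p - x‖^2 + fp : ℝ) : EReal) ≤
          (((1/2 : ℝ) * ‖zt - x‖^2 + ((1 - t) * fp + t * r) : ℝ) : EReal) := by
        calc ((1/2 * ‖p - x‖^2 + fp : ℝ) : EReal)
            = (((1/2 : ℝ) * ‖p - x‖^2 : ℝ) : EReal) + F p := by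
              rw [hfp, ← EReal.coe_add]
          _ ≤ (((1/2 : ℝ) * ‖zt - x‖^2 : ℝ) : EReal) + F zt := hp zt
          _ ≤ (((1/2 : ℝ) * ‖zt - x‖^2 : ℝ) : EReal)
              + (((1 - t) * fp + t * r : ℝ) : EReal) := add_le_add_right hFzt _
          _ = _ := (EReal.coe_add _ _).symm
      rw [EReal.coe_le_coe_iff] at hGzt
      have e1 : zt - x = (p - x) + t • (z - p) := by rw [hzt]; module
      have e2 : ‖zt - x‖^2 = ‖p - x‖^2 + 2 * (t * ⟪p - x, z - p⟫)
          + t^2 * ‖z - p‖^2 := by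
        rw [e1, norm_add_sq_real, real_inner_smul_right, norm_smul, mul_pow,
          Real.norm_eq_abs, sq_abs]
      have e3 : ⟪q, z - p⟫ = -⟪p - x, z - p⟫ := by
        rw [hq]
        rw [show x - p = -(p - x) by abel, inner_neg_left]
      have hmain : 0 ≤ t * (r + t/2 * ‖z - p‖^2 - (fp + ⟪q, z - p⟫)) := by
        rw [e3]
        nlinarith [hGzt, e2]
      have := le_of_mul_le_mul_left (by linarith : t * 0 ≤ t * (r + t/2 * ‖z - p‖^2
        - (fp + ⟪q, z - p⟫))) ht0
      linarith
    refine le_of_forall_pos_le_add fun ε hε => ?_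
    by_cases hd : ‖z - p‖^2 = 0
    · have := hkey 1 one_pos le_rfl
      rw [hd] at this
      linarith
    · have hdpos : 0 < ‖z - p‖^2 := lt_of_le_of_ne (by positivity) (Ne.symm hd)
      set t : ℝ := min 1 (2 * ε / ‖z - p‖^2) with ht
      have ht0 : 0 < t := lt_min one_pos (by positivity)
      have ht1 : t ≤ 1 := min_le_left _ _
      have h2 : t / 2 * ‖z - p‖^2 ≤ ε := by
        have h3 : t ≤ 2 * ε / ‖z - p‖^2 := min_le_right _ _
        rw [div_mul_eq_mul_div, div_le_iff₀ (by norm_num)]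
        calc t * ‖z - p‖^2 ≤ (2 * ε / ‖z - p‖^2) * ‖z - p‖^2 :=
              mul_le_mul_of_nonneg_right h3 (le_of_lt hdpos)
          _ = ε * 2 := by rw [div_mul_cancel₀ _ (ne_of_gt hdpos)]; ring
      have := hkey t ht0 ht1
      linarith
  -- strong inequality for p
  have hstrongp : ∀ z : X, ((1/2 * ‖p - x‖^2 + fp + 1/2 * ‖z - p‖^2 : ℝ) : EReal) ≤
      (((1/2 : ℝ) * ‖z - x‖^2 : ℝ) : EReal) + F z := by
    intro z
    by_cases hz : F z = ⊤
    · rw [hz, EReal.coe_add_top]; exact le_top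
    obtain ⟨r, hr⟩ := ereal_real hz (hbot z)
    rw [hr, ← EReal.coe_add, EReal.coe_le_coe_iff]
    have h1 := hsub z r hr
    have e1 : z - x = (z - p) - q := by rw [hq]; abel
    have e2 : ‖z - x‖^2 = ‖z - p‖^2 - 2 * ⟪z - p, q⟫ + ‖q‖^2 := by
      rw [e1, norm_sub_sq_real]
    have e3 : ‖p - x‖ = ‖q‖ := by rw [hq, norm_sub_rev]
    have e4 : ⟪q, z - p⟫ = ⟪z - p, q⟫ := real_inner_comm _ _
    rw [e3]
    nlinarith [h1, e2, e4]
  -- required minimality for p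
  have hpmin : ∀ z : X, (((1/2 : ℝ) * ‖p - x‖ ^ 2 : ℝ) : EReal) + F p ≤
      (((1/2 : ℝ) * ‖z - x‖ ^ 2 : ℝ) : EReal) + F z := hp
  -- uniqueness for p
  have hpuniq : ∀ p' : X, (∀ z : X, (((1/2 : ℝ) * ‖p' - x‖ ^ 2 : ℝ) : EReal) + F p' ≤
      (((1/2 : ℝ) * ‖z - x‖ ^ 2 : ℝ) : EReal) + F z) → p' = p := by
    intro p' hp'
    have h1 := hp' p
    have hFp'top : F p' ≠ ⊤ := by
      intro h
      rw [h, EReal.coe_add_top, hfp, ← EReal.coe_add, top_le_iff] at h1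
      exact EReal.coe_ne_top _ h1
    obtain ⟨fp', hfp'⟩ := ereal_real hFp'top (hbot p')
    rw [hfp', hfp, ← EReal.coe_add, ← EReal.coe_add, EReal.coe_le_coe_iff] at h1
    have h2 := hstrongp p'
    rw [hfp', ← EReal.coe_add, EReal.coe_le_coe_iff] at h2
    have h3 : ‖p' - p‖^2 ≤ 0 := by linarith
    have h4 : ‖p' - p‖^2 = 0 := le_antisymm h3 (by positivity)
    have h5 : p' - p = 0 := by
      rwa [pow_eq_zero_iff (two_ne_zero), norm_eq_zero] at h4
    exact sub_eq_zero.1 h5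
  -- value of the conjugate at q
  have hconj_lb : ∀ w : X, ((⟪w, p⟫ - fp : ℝ) : EReal) ≤ HConj F w := by
    intro w
    have h1 := le_iSup (fun z => (((inner ℝ w z : ℝ)) : EReal) - F z) p
    rw [EReal.coe_sub]
    simpa [hfp, HConj] using h1
  have hconjq : HConj F q = ((⟪q, p⟫ - fp : ℝ) : EReal) := by
    refine le_antisymm (iSup_le fun z => ?_) (hconj_lb q)
    by_cases hz : F z = ⊤
    · rw [hz]
      rw [EReal.sub_top]
      exact bot_le
    obtain ⟨r, hr⟩ := ereal_real hz (hbot z)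
    rw [hr, ← EReal.coe_sub, EReal.coe_le_coe_iff]
    have h1 := hsub z r hr
    have e1 : ⟪q, z - p⟫ = ⟪q, z⟫ - ⟪q, p⟫ := inner_sub_right _ _ _
    have : (inner ℝ q z : ℝ) = ⟪q, z⟫ := rfl
    rw [this]
    linarith
  -- HConj F w is never ⊥
  have hconjbot : ∀ w : X, HConj F w ≠ ⊥ := by
    intro w h
    have := hconj_lb w
    rw [h, le_bot_iff] at this
    exact EReal.coe_ne_bot _ this
  -- strong inequality for q
  have hstrongq : ∀ w : X, ((1/2 * ‖q - x‖^2 + (⟪q, p⟫ - fp) + 1/2 * ‖w - q‖^2 : ℝ) : EReal)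
      ≤ (((1/2 : ℝ) * ‖w - x‖^2 : ℝ) : EReal) + HConj F w := by
    intro w
    by_cases hw : HConj F w = ⊤
    · rw [hw, EReal.coe_add_top]; exact le_top
    obtain ⟨s, hs⟩ := ereal_real hw (hconjbot w)
    have hslb : ⟪w, p⟫ - fp ≤ s := by
      have := hconj_lb w
      rwa [hs, EReal.coe_le_coe_iff] at this
    rw [hs, ← EReal.coe_add, EReal.coe_le_coe_iff]
    have e1 : w - x = (w - q) - p := by rw [hq]; abel
    have e2 : ‖w - x‖^2 = ‖w - q‖^2 - 2 * ⟪w - q, p⟫ + ‖p‖^2 := by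
      rw [e1, norm_sub_sq_real]
    have e3 : ‖q - x‖ = ‖p‖ := by
      rw [show q - x = -p by rw [hq]; abel, norm_neg]
    have e4 : ⟪w - q, p⟫ = ⟪w, p⟫ - ⟪q, p⟫ := inner_sub_left _ _ _
    rw [e3]
    nlinarith [hslb, e2, e4]
  -- minimality for q
  have hqmin : ∀ z : X, (((1/2 : ℝ) * ‖q - x‖ ^ 2 : ℝ) : EReal) + HConj F q ≤
      (((1/2 : ℝ) * ‖z - x‖ ^ 2 : ℝ) : EReal) + HConj F z := by
    intro z
    rw [hconjq, ← EReal.coe_add]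
    calc (((1/2 : ℝ) * ‖q - x‖ ^ 2 + (⟪q, p⟫ - fp) : ℝ) : EReal)
        ≤ ((1/2 * ‖q - x‖^2 + (⟪q, p⟫ - fp) + 1/2 * ‖z - q‖^2 : ℝ) : EReal) := by
          rw [EReal.coe_le_coe_iff]; nlinarith [sq_nonneg ‖z - q‖]
      _ ≤ _ := hstrongq z
  have hquniq : ∀ q' : X, (∀ z : X, (((1/2 : ℝ) * ‖q' - x‖ ^ 2 : ℝ) : EReal) + HConj F q' ≤
      (((1/2 : ℝ) * ‖z - x‖ ^ 2 : ℝ) : EReal) + HConj F z) → q' = q := by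
    intro q' hq'
    have h1 := hq' q
    have hFq'top : HConj F q' ≠ ⊤ := by
      intro h
      rw [h, EReal.coe_add_top, hconjq, ← EReal.coe_add, top_le_iff] at h1
      exact EReal.coe_ne_top _ h1
    obtain ⟨s', hs'⟩ := ereal_real hFq'top (hconjbot q')
    rw [hs', hconjq, ← EReal.coe_add, ← EReal.coe_add, EReal.coe_le_coe_iff] at h1
    have h2 := hstrongq q'
    rw [hs', ← EReal.coe_add, EReal.coe_le_coe_iff] at h2
    have h3 : ‖q' - q‖^2 ≤ 0 := by linarith
    have h4 : ‖q' - q‖^2 = 0 := le_antisymm h3 (by positivity)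
    have h5 : q' - q = 0 := by
      rwa [pow_eq_zero_iff (two_ne_zero), norm_eq_zero] at h4
    exact sub_eq_zero.1 h5
  exact ⟨p, q, hpmin, hpuniq, hqmin, hquniq, by rw [hq]; abel⟩
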